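/- For every α ∈ (0,2) and every integer n ∈ ℤ, one has (1/(2π)) ∫_{−π}^{π} e^{−i n η} (4 sin²(η/2))^{α/2} dη = (−1)^n Γ(α+1) / (Γ(α/2 + n + 1) Γ(α/2 − n + 1)). In particular this quantity is real. -/

import Mathlib

open MeasureTheory Real

noncomputable section

/-- The finite difference weight `a_n^{(α)} = (1/(2π)) ∫_{-π}^{π} e^{-inη} (4 sin²(η/2))^{α/2} dη`. -/
def aWeightC (α : ℝ) (n : ℤ) : ℂ :=
  (1 / (2 * Real.pi)) • ∫ η in (-Real.pi)..Real.pi,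
    Complex.exp (-Complex.I * (n : ℂ) * (η : ℂ)) *
      (((4 * Real.sin (η / 2) ^ 2) ^ (α / 2) : ℝ) : ℂ)



open MeasureTheory Real intervalIntegral

noncomputable section

namespace Stmt9Aux

/-- the symbol -/
def g (α η : ℝ) : ℝ := (4 * Real.sin (η / 2) ^ 2) ^ (α / 2)

lemma g_nonneg (α η : ℝ) : 0 ≤ g α η := Real.rpow_nonneg (by positivity) _

lemma g_cont {α : ℝ} (hα0 : 0 < α) : Continuous (g α) := by
  apply Continuous.rpow_const (by continuity)
  intro x; right; positivity

lemma g_neg (α η : ℝ) : g α (-η) = g α η := by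
  unfold g; rw [neg_div, Real.sin_neg, neg_pow]; ring_nf

def E (α : ℝ) (m : ℤ) (η : ℝ) : ℂ :=
  Complex.exp (-Complex.I * (m : ℂ) * (η : ℂ)) * ((g α η : ℝ) : ℂ)

lemma E_cont {α : ℝ} (hα0 : 0 < α) (m : ℤ) : Continuous (E α m) := by
  apply Continuous.mul
  · exact Complex.continuous_exp.comp (by continuity)
  · exact Complex.continuous_ofReal.comp (g_cont hα0)

def A (α : ℝ) (m : ℤ) : ℂ := ∫ η in (-Real.pi)..Real.pi, E α m η

lemma aWeightC_eq (α : ℝ) (m : ℤ) :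
    (1 / (2 * Real.pi)) • ∫ η in (-Real.pi)..Real.pi,
      Complex.exp (-Complex.I * (m : ℂ) * (η : ℂ)) *
        (((4 * Real.sin (η / 2) ^ 2) ^ (α / 2) : ℝ) : ℂ) = (1 / (2 * Real.pi)) • A α m := rfl



lemma g_hasDeriv {α : ℝ} {η : ℝ} (h : Real.sin (η / 2) ≠ 0) :
    HasDerivAt (g α) (α * Real.sin η * (4 * Real.sin (η / 2) ^ 2) ^ (α / 2 - 1)) η := by
  have hu : HasDerivAt (fun η : ℝ => 4 * Real.sin (η / 2) ^ 2) (2 * Real.sin η) η := by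
    have h1 : HasDerivAt (fun η : ℝ => Real.sin (η / 2)) (Real.cos (η / 2) * (1 / 2)) η := by
      simpa [Function.comp_def] using (Real.hasDerivAt_sin (η / 2)).comp η ((hasDerivAt_id η).div_const 2)
    have := ((h1.pow 2).const_mul (4 : ℝ))
    refine this.congr_deriv ?_
    have : Real.sin η = 2 * Real.sin (η / 2) * Real.cos (η / 2) := by
      rw [← Real.sin_two_mul]; ring_nf
    rw [this]; ring
  have := hu.rpow_const (p := α / 2) (Or.inl (by positivity))
  refine this.congr_deriv ?_
  ring
lemma key_exp1 (η : ℝ) : Complex.exp (Complex.I * η) - 1 =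
    2 * Complex.I * (Real.sin (η / 2) : ℂ) * Complex.exp (Complex.I * (η / 2)) := by
  have h2 : Complex.exp (Complex.I * (η / 2)) =
      (Real.cos (η / 2) : ℂ) + (Real.sin (η / 2) : ℂ) * Complex.I := by
    rw [mul_comm, Complex.exp_mul_I, Complex.ofReal_cos, Complex.ofReal_sin]; norm_cast
  have h1 : Complex.exp (Complex.I * η) = Complex.exp (Complex.I * (η / 2)) ^ 2 := by
    rw [← Complex.exp_nat_mul]; ring_nf
  have hc : (Real.cos (η / 2) : ℂ) ^ 2 = 1 - (Real.sin (η / 2) : ℂ) ^ 2 := by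
    rw [← Complex.ofReal_pow, Real.cos_sq']; push_cast; ring
  rw [h1, h2]
  linear_combination (-((Real.sin (η/2):ℂ))^2) * Complex.I_sq + hc
lemma key_exp2 (η : ℝ) : Complex.exp (Complex.I * η) + 1 =
    2 * (Real.cos (η / 2) : ℂ) * Complex.exp (Complex.I * (η / 2)) := by
  have h2 : Complex.exp (Complex.I * (η / 2)) =
      (Real.cos (η / 2) : ℂ) + (Real.sin (η / 2) : ℂ) * Complex.I := by
    rw [mul_comm, Complex.exp_mul_I, Complex.ofReal_cos, Complex.ofReal_sin]; norm_cast
  have h1 : Complex.exp (Complex.I * η) = Complex.exp (Complex.I * (η / 2)) ^ 2 := by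
    rw [← Complex.exp_nat_mul]; ring_nf
  have hc : (Real.cos (η / 2) : ℂ) ^ 2 = 1 - (Real.sin (η / 2) : ℂ) ^ 2 := by
    rw [← Complex.ofReal_pow, Real.cos_sq']; push_cast; ring
  rw [h1, h2]
  linear_combination ((Real.sin (η/2):ℂ)^2) * Complex.I_sq - hc


end Stmt9Aux
namespace Stmt9Aux

lemma hasDerivAt_cexp_real (c : ℂ) (η : ℝ) :
    HasDerivAt (fun x : ℝ => Complex.exp (c * x)) (c * Complex.exp (c * η)) η := by
  have h : HasDerivAt (fun z : ℂ => Complex.exp (c * z)) (c * Complex.exp (c * η)) (η : ℂ) := by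
    simpa [mul_comm, Function.comp_def] using
      (Complex.hasDerivAt_exp (c * η)).comp (η : ℂ) ((hasDerivAt_id (η : ℂ)).const_mul c)
  exact h.comp_ofReal

lemma key {α η : ℝ} (h : Real.sin (η / 2) ≠ 0) :
    (Complex.exp (Complex.I * η) - 1) *
        ((α * Real.sin η * (4 * Real.sin (η / 2) ^ 2) ^ (α / 2 - 1) : ℝ) : ℂ) =
      Complex.I * (α / 2) * (Complex.exp (Complex.I * η) + 1) * ((g α η : ℝ) : ℂ) := by
  have hs2 : (0 : ℝ) < 4 * Real.sin (η / 2) ^ 2 := by positivity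
  have hgsplit : g α η = (4 * Real.sin (η / 2) ^ 2) ^ (α / 2 - 1) * (4 * Real.sin (η / 2) ^ 2) := by
    unfold g
    rw [← Real.rpow_add_one hs2.ne' (α / 2 - 1)]; ring_nf
  have hsin : Real.sin η = 2 * Real.sin (η / 2) * Real.cos (η / 2) := by
    rw [← Real.sin_two_mul]; ring_nf
  rw [hgsplit, hsin, key_exp1, key_exp2]
  push_cast
  ring

lemma rec {α : ℝ} (hα0 : 0 < α) (n : ℤ) :
    ((n : ℂ) + (α : ℂ) / 2) * A α n = ((n : ℂ) - 1 - (α : ℂ) / 2) * A α (n - 1) := by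
  set F : ℝ → ℂ := fun η =>
    Complex.exp (-Complex.I * n * η) * (Complex.exp (Complex.I * η) - 1) * ((g α η : ℝ) : ℂ)
    with hF
  set φ : ℝ → ℂ := fun η =>
    (-Complex.I * n * Complex.exp (-Complex.I * n * η) * (Complex.exp (Complex.I * η) - 1)
      + Complex.I * Complex.exp (-Complex.I * ((n : ℂ) - 1) * η)
      + Complex.I * ((α : ℂ) / 2) * Complex.exp (-Complex.I * n * η) *
          (Complex.exp (Complex.I * η) + 1)) * ((g α η : ℝ) : ℂ) with hφ
  -- derivative
  have hderiv : ∀ η : ℝ, Real.sin (η / 2) ≠ 0 → HasDerivAt F (φ η) η := by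
    intro η hη
    have hg := (g_hasDeriv (α := α) hη).ofReal_comp
    have hX := hasDerivAt_cexp_real (-Complex.I * n) η
    have hY := hasDerivAt_cexp_real Complex.I η
    have hC : HasDerivAt
        (fun x : ℝ => Complex.exp (-Complex.I * n * x) * (Complex.exp (Complex.I * x) - 1))
        (-Complex.I * n * Complex.exp (-Complex.I * n * η) * (Complex.exp (Complex.I * η) - 1)
          + Complex.exp (-Complex.I * n * η) * (Complex.I * Complex.exp (Complex.I * η))) η :=
      hX.mul (hY.sub_const 1)
    have := hC.mul hg
    refine this.congr_deriv ?_
    symm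
    have hme : Complex.exp (-Complex.I * n * η) * Complex.exp (Complex.I * η)
        = Complex.exp (-Complex.I * ((n : ℂ) - 1) * η) := by
      rw [← Complex.exp_add]; ring_nf
    have hk := key (α := α) hη
    rw [hφ]
    push_cast at hk ⊢
    linear_combination (-Complex.I * ((g α η : ℝ) : ℂ)) * hme +
      (-Complex.exp (-Complex.I * n * η)) * hk
  -- continuity
  have hgc : Continuous fun η : ℝ => ((g α η : ℝ) : ℂ) :=
    Complex.continuous_ofReal.comp (g_cont hα0)
  have hFc : Continuous F := by
    rw [hF]; fun_prop
  have hφc : Continuous φ := by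
    rw [hφ]; fun_prop
  -- FTC on the two halves
  have h1 : (∫ η in (0:ℝ)..Real.pi, φ η) = F Real.pi - F 0 := by
    apply integral_eq_sub_of_hasDeriv_right_of_le Real.pi_pos.le hFc.continuousOn
      (fun x hx => ?_) (hφc.intervalIntegrable _ _)
    refine (hderiv x ?_).hasDerivWithinAt
    have : 0 < Real.sin (x / 2) :=
      Real.sin_pos_of_pos_of_lt_pi (by linarith [hx.1]) (by linarith [hx.2, Real.pi_pos])
    exact this.ne'
  have h2 : (∫ η in (-Real.pi)..(0:ℝ), φ η) = F 0 - F (-Real.pi) := by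
    apply integral_eq_sub_of_hasDeriv_right_of_le (by linarith [Real.pi_pos]) hFc.continuousOn
      (fun x hx => ?_) (hφc.intervalIntegrable _ _)
    refine (hderiv x ?_).hasDerivWithinAt
    have : Real.sin (x / 2) < 0 :=
      Real.sin_neg_of_neg_of_neg_pi_lt (by linarith [hx.2]) (by linarith [hx.1, Real.pi_pos])
    exact this.ne
  have htot : (∫ η in (-Real.pi)..Real.pi, φ η) = F Real.pi - F (-Real.pi) := by
    rw [← integral_add_adjacent_intervals (a := -Real.pi) (b := 0) (c := Real.pi)
      (hφc.intervalIntegrable _ _) (hφc.intervalIntegrable _ _), h1, h2]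
    ring
  -- boundary terms cancel
  have hbd : F Real.pi - F (-Real.pi) = 0 := by
    have hgeq : g α (-Real.pi) = g α Real.pi := g_neg α Real.pi
    have he1 : Complex.exp (Complex.I * (Real.pi : ℝ)) = -1 := by
      rw [mul_comm, Complex.exp_mul_I, ← Complex.ofReal_cos, ← Complex.ofReal_sin]
      simp [Real.cos_pi, Real.sin_pi]
    have he2 : Complex.exp (Complex.I * ((-Real.pi : ℝ) : ℂ)) = -1 := by
      push_cast
      rw [mul_neg, Complex.exp_neg, mul_comm, Complex.exp_pi_mul_I]
      norm_num
    have hc : Complex.exp (-Complex.I * n * ((Real.pi : ℝ) : ℂ))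
        = Complex.exp (-Complex.I * n * ((-Real.pi : ℝ) : ℂ)) := by
      push_cast
      rw [show -Complex.I * (n : ℂ) * (Real.pi : ℂ) = (n : ℤ) * (-(Complex.I * Real.pi)) by
        push_cast; ring,
        show -Complex.I * (n : ℂ) * (-(Real.pi : ℂ)) = (n : ℤ) * (Complex.I * Real.pi) by
        push_cast; ring, Complex.exp_int_mul, Complex.exp_int_mul, Complex.exp_neg,
        mul_comm Complex.I (Real.pi : ℂ), Complex.exp_pi_mul_I]
      norm_num
    rw [hF]
    simp only
    rw [hgeq, hc]
    push_cast at he1 he2 ⊢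
    rw [he1, he2]
    ring
  -- expansion of φ
  have hφE : ∀ η : ℝ, φ η = (Complex.I * (1 - (n:ℂ) + (α:ℂ)/2)) * E α (n - 1) η
      + (Complex.I * ((n:ℂ) + (α:ℂ)/2)) * E α n η := by
    intro η
    have hme : Complex.exp (-Complex.I * n * η) * Complex.exp (Complex.I * η)
        = Complex.exp (-Complex.I * ((n : ℂ) - 1) * η) := by
      rw [← Complex.exp_add]; ring_nf
    rw [hφ]
    simp only [E]
    push_cast
    linear_combination (((g α η : ℝ) : ℂ) * (Complex.I * ((α:ℂ)/2) - Complex.I * n)) * hme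
  have hint : ∀ m : ℤ, IntervalIntegrable (E α m) volume (-Real.pi) Real.pi :=
    fun m => (E_cont hα0 m).intervalIntegrable _ _
  have hsum : (Complex.I * (1 - (n:ℂ) + (α:ℂ)/2)) * A α (n - 1)
      + (Complex.I * ((n:ℂ) + (α:ℂ)/2)) * A α n = 0 := by
    have : (∫ η in (-Real.pi)..Real.pi, φ η)
        = (Complex.I * (1 - (n:ℂ) + (α:ℂ)/2)) * A α (n - 1)
          + (Complex.I * ((n:ℂ) + (α:ℂ)/2)) * A α n := by
      rw [intervalIntegral.integral_congr (g := fun η =>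
          (Complex.I * (1 - (n:ℂ) + (α:ℂ)/2)) * E α (n - 1) η
          + (Complex.I * ((n:ℂ) + (α:ℂ)/2)) * E α n η) (fun η _ => hφE η),
        intervalIntegral.integral_add ((hint (n-1)).const_mul _) ((hint n).const_mul _),
        intervalIntegral.integral_const_mul, intervalIntegral.integral_const_mul]
      rfl
    rw [← this, htot, hbd]
  have h2' : (1 - (n:ℂ) + (α:ℂ)/2) * A α (n - 1) + ((n:ℂ) + (α:ℂ)/2) * A α n = 0 := by
    linear_combination (-Complex.I) * hsum +
      ((1 - (n:ℂ) + (α:ℂ)/2) * A α (n - 1) + ((n:ℂ) + (α:ℂ)/2) * A α n) * Complex.I_sq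
  linear_combination h2'

end Stmt9Aux
namespace Stmt9Aux

lemma mono_lemma : StrictMonoOn (fun θ : ℝ => Real.sin (θ / 2) ^ 2) (Set.Icc 0 Real.pi) := by
  have hmem : ∀ x ∈ Set.Icc (0:ℝ) Real.pi, x / 2 ∈ Set.Icc (-(Real.pi/2)) (Real.pi/2) := by
    intro x hx
    constructor <;> [linarith [hx.1, Real.pi_pos]; linarith [hx.2]]
  intro x hx y hy hxy
  have h1 : Real.sin (x / 2) < Real.sin (y / 2) :=
    Real.strictMonoOn_sin (hmem x hx) (hmem y hy) (by linarith)
  have h0 : 0 ≤ Real.sin (x / 2) :=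
    Real.sin_nonneg_of_nonneg_of_le_pi (by linarith [hx.1]) (by linarith [hx.2, Real.pi_pos])
  exact pow_lt_pow_left₀ h1 h0 two_ne_zero

lemma image_lemma : (fun θ : ℝ => Real.sin (θ / 2) ^ 2) '' Set.Ioo 0 Real.pi
    = Set.Ioo (0 : ℝ) 1 := by
  have fc : ContinuousOn (fun θ : ℝ => Real.sin (θ / 2) ^ 2) (Set.Icc 0 Real.pi) := by fun_prop
  apply subset_antisymm
  · rintro _ ⟨θ, hθ, rfl⟩
    have h1 := mono_lemma (Set.mem_Icc.2 ⟨le_refl 0, Real.pi_pos.le⟩)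
      ⟨hθ.1.le, hθ.2.le⟩ hθ.1
    have h2 := mono_lemma ⟨hθ.1.le, hθ.2.le⟩ (Set.mem_Icc.2 ⟨Real.pi_pos.le, le_refl _⟩) hθ.2
    refine ⟨by simpa using h1, by simpa using h2⟩
  · have := intermediate_value_Ioo Real.pi_pos.le fc
    simpa using this

lemma f_hasDeriv (θ : ℝ) : HasDerivAt (fun θ : ℝ => Real.sin (θ / 2) ^ 2)
    (Real.sin (θ / 2) * Real.cos (θ / 2)) θ := by
  have h1 : HasDerivAt (fun η : ℝ => Real.sin (η / 2)) (Real.cos (θ / 2) * (1 / 2)) θ := by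
    simpa [Function.comp_def] using (Real.hasDerivAt_sin (θ / 2)).comp θ ((hasDerivAt_id θ).div_const 2)
  refine (h1.pow 2).congr_deriv ?_
  ring

lemma subst_lemma {α : ℝ} (hα0 : 0 < α) :
    ∫ θ in Set.Ioo (0:ℝ) Real.pi, g α θ
      = (2:ℝ)^α * ∫ x in Set.Ioo (0:ℝ) 1,
          x ^ ((α+1)/2 - 1) * (1-x) ^ ((1:ℝ)/2 - 1) := by
  rw [← image_lemma,
    integral_image_eq_integral_abs_deriv_smul measurableSet_Ioo
      (fun x _ => (f_hasDeriv x).hasDerivWithinAt)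
      (mono_lemma.injOn.mono Set.Ioo_subset_Icc_self), ← MeasureTheory.integral_const_mul]
  apply setIntegral_congr_fun measurableSet_Ioo
  intro θ hθ
  have hs : 0 < Real.sin (θ / 2) :=
    Real.sin_pos_of_pos_of_lt_pi (by linarith [hθ.1]) (by linarith [hθ.2, Real.pi_pos])
  have hc : 0 < Real.cos (θ / 2) :=
    Real.cos_pos_of_mem_Ioo ⟨by linarith [hθ.1, Real.pi_pos], by linarith [hθ.2]⟩
  have e1 : (Real.sin (θ/2) ^ 2) ^ ((α+1)/2 - 1) = Real.sin (θ/2) ^ (α - 1) := by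
    rw [← Real.rpow_natCast (Real.sin (θ/2)) 2, ← Real.rpow_mul hs.le,
      show ((2:ℕ):ℝ) * ((α+1)/2 - 1) = α - 1 by push_cast; ring]
  have e2 : (1 - Real.sin (θ/2) ^ 2) ^ ((1:ℝ)/2 - 1) = (Real.cos (θ/2))⁻¹ := by
    rw [← Real.cos_sq', ← Real.rpow_natCast (Real.cos (θ/2)) 2, ← Real.rpow_mul hc.le,
      show ((2:ℕ):ℝ) * ((1:ℝ)/2 - 1) = -1 by push_cast; ring, Real.rpow_neg_one]
  have e3 : g α θ = (2:ℝ)^α * Real.sin (θ/2) ^ α := by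
    unfold g
    rw [show (4 : ℝ) * Real.sin (θ/2) ^ 2 = (2 * Real.sin (θ/2)) ^ 2 by ring,
      ← Real.rpow_natCast (2 * Real.sin (θ/2)) 2, ← Real.rpow_mul (by positivity),
      show ((2:ℕ):ℝ) * (α/2) = α by push_cast; ring, Real.mul_rpow (by norm_num) hs.le]
  simp only [smul_eq_mul]
  rw [e1, e2, e3, abs_of_pos (by positivity)]
  have e4 : Real.sin (θ/2) ^ (α - 1) * Real.sin (θ/2) = Real.sin (θ/2) ^ α := by
    rw [← Real.rpow_add_one hs.ne' (α - 1)]; ring_nf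
  field_simp
  linear_combination (-1 : ℝ) * e4


lemma alg {x b t y sq G : ℝ} (hb : b ≠ 0) (ht : t * y = 1) (hs : sq * sq = Real.pi)
    (hd : x * b = G * y * sq) :
    2 * (t * (x * sq / b)) = 2 * Real.pi * (G / b ^ 2) := by
  have hx : x = G * y * sq / b := by rw [eq_div_iff hb]; exact hd
  rw [hx, show 2 * (t * (G * y * sq / b * sq / b)) = 2 * (t * y) * (sq * sq) * G / b ^ 2 by ring, ht, hs]
  ring

lemma beta_val {α : ℝ} (hα0 : 0 < α) :
    ∫ x in Set.Ioo (0:ℝ) 1, x ^ ((α+1)/2 - 1) * (1-x) ^ ((1:ℝ)/2 - 1)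
      = Real.Gamma ((α+1)/2) * Real.Gamma (1/2) / Real.Gamma (α/2+1) := by
  have hb : Complex.betaIntegral (((α+1)/2 : ℝ) : ℂ) (((1:ℝ)/2 : ℝ) : ℂ)
      = ((∫ x in Set.Ioo (0:ℝ) 1, x ^ ((α+1)/2 - 1) * (1-x) ^ ((1:ℝ)/2 - 1) : ℝ) : ℂ) := by
    rw [Complex.betaIntegral, intervalIntegral.integral_of_le zero_le_one,
      MeasureTheory.integral_Ioc_eq_integral_Ioo,
      show ((∫ x in Set.Ioo (0:ℝ) 1, x ^ ((α+1)/2 - 1) * (1-x) ^ ((1:ℝ)/2 - 1) : ℝ) : ℂ)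
          = ∫ x in Set.Ioo (0:ℝ) 1,
              ((x ^ ((α+1)/2 - 1) * (1-x) ^ ((1:ℝ)/2 - 1) : ℝ) : ℂ) from
        (_root_.integral_ofReal (𝕜 := ℂ)).symm]
    apply setIntegral_congr_fun measurableSet_Ioo
    intro x hx
    have hx0 : (0:ℝ) ≤ x := hx.1.le
    have hx1 : (0:ℝ) ≤ 1 - x := by linarith [hx.2]
    simp only [Complex.ofReal_mul]
    rw [Complex.ofReal_cpow hx0, Complex.ofReal_cpow hx1]
    push_cast
    ring
  have h := Complex.Gamma_mul_Gamma_eq_betaIntegral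
    (s := (((α+1)/2 : ℝ) : ℂ)) (t := (((1:ℝ)/2 : ℝ) : ℂ))
    (by simp; positivity) (by norm_num)
  rw [hb, ← Complex.ofReal_add, Complex.Gamma_ofReal, Complex.Gamma_ofReal,
    Complex.Gamma_ofReal, show (α+1)/2 + (1:ℝ)/2 = α/2 + 1 by ring] at h
  have hΓb : Real.Gamma (α/2 + 1) ≠ 0 := (Real.Gamma_pos_of_pos (by positivity)).ne'
  rw [eq_div_iff hΓb]
  have h' : Real.Gamma ((α+1)/2) * Real.Gamma ((1:ℝ)/2)
      = Real.Gamma (α/2+1) * ∫ x in Set.Ioo (0:ℝ) 1, x ^ ((α+1)/2 - 1) * (1-x) ^ ((1:ℝ)/2 - 1) := by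
    exact_mod_cast h
  linarith [h']

lemma A_zero {α : ℝ} (hα0 : 0 < α) :
    A α 0 = ((2 * Real.pi * (Real.Gamma (α+1) / (Real.Gamma (α/2+1))^2) : ℝ) : ℂ) := by
  have hA : A α 0 = ((∫ η in (-Real.pi)..Real.pi, g α η : ℝ) : ℂ) := by
    rw [A, ← intervalIntegral.integral_ofReal]
    apply intervalIntegral.integral_congr
    intro η _
    simp [E]
  have heven : (∫ η in (-Real.pi)..(0:ℝ), g α η) = ∫ η in (0:ℝ)..Real.pi, g α η := by
    rw [show (∫ η in (0:ℝ)..Real.pi, g α η) = ∫ η in (0:ℝ)..Real.pi, g α (-η) from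
      intervalIntegral.integral_congr (fun η _ => (g_neg α η).symm),
      intervalIntegral.integral_comp_neg]
    norm_num
  have hsplit : (∫ η in (-Real.pi)..Real.pi, g α η) = 2 * ∫ η in (0:ℝ)..Real.pi, g α η := by
    rw [← intervalIntegral.integral_add_adjacent_intervals (a := -Real.pi) (b := 0)
      (c := Real.pi) (((g_cont hα0).intervalIntegrable _ _)) ((g_cont hα0).intervalIntegrable _ _),
      heven]
    ring
  have hIoo : (∫ η in (0:ℝ)..Real.pi, g α η) = ∫ θ in Set.Ioo (0:ℝ) Real.pi, g α θ := by
    rw [intervalIntegral.integral_of_le Real.pi_pos.le, MeasureTheory.integral_Ioc_eq_integral_Ioo]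
  rw [hA, hsplit, hIoo, subst_lemma hα0, beta_val hα0]
  congr 1
  -- real algebra with duplication formula
  have hd := Real.Gamma_mul_Gamma_add_half ((α+1)/2)
  rw [show (α+1)/2 + 1/2 = α/2 + 1 by ring, show 2*((α+1)/2) = α + 1 by ring] at hd
  have hΓb : (0:ℝ) < Real.Gamma (α/2 + 1) := Real.Gamma_pos_of_pos (by positivity)
  have ht : (2:ℝ)^α * (2:ℝ)^(1 - (α+1)) = 1 := by
    rw [← Real.rpow_add (by norm_num), show α + (1 - (α+1)) = 0 by ring, Real.rpow_zero]
  have hs : Real.sqrt Real.pi * Real.sqrt Real.pi = Real.pi :=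
    Real.mul_self_sqrt Real.pi_pos.le
  rw [Real.Gamma_one_half_eq]
  exact alg hΓb.ne' ht hs hd

end Stmt9Aux

namespace Stmt9Aux

variable {α : ℝ}

lemma ne_int (hα0 : 0 < α) (hα2 : α < 2) (m : ℤ) : α / 2 ≠ (m : ℝ) := by
  rcases le_or_gt m 0 with h | h
  · have : (m : ℝ) ≤ 0 := by exact_mod_cast h
    intro hc; linarith
  · have : (1 : ℝ) ≤ (m : ℝ) := by exact_mod_cast h
    intro hc; linarith

lemma gamma_ne (hα0 : 0 < α) (hα2 : α < 2) (m : ℤ) : Real.Gamma (α / 2 + m) ≠ 0 := by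
  apply Real.Gamma_ne_zero
  intro k hk
  exact ne_int hα0 hα2 (-k - m) (by push_cast; linarith)

/-- the closed-form candidate -/
def B (α : ℝ) (n : ℤ) : ℝ :=
  (-1 : ℝ) ^ n * Real.Gamma (α + 1) /
    (Real.Gamma (α / 2 + n + 1) * Real.Gamma (α / 2 - n + 1))

lemma Bstep (hα0 : 0 < α) (hα2 : α < 2) (n : ℤ) :
    ((n : ℝ) + α / 2) * B α n = ((n : ℝ) - 1 - α / 2) * B α (n - 1) := by
  have h1 : α / 2 + (n : ℝ) ≠ 0 := by
    have := ne_int hα0 hα2 (-n); intro hc; apply this; push_cast; linarith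
  have h2 : α / 2 - (n : ℝ) + 1 ≠ 0 := by
    have := ne_int hα0 hα2 (n - 1); intro hc; apply this; push_cast; linarith
  have hg1 : Real.Gamma (α / 2 + (n : ℝ) + 1) = (α / 2 + n) * Real.Gamma (α / 2 + n) :=
    Real.Gamma_add_one h1
  have hg2 : Real.Gamma (α / 2 - ((n : ℝ) - 1) + 1)
      = (α / 2 - n + 1) * Real.Gamma (α / 2 - n + 1) := by
    rw [show α / 2 - ((n : ℝ) - 1) + 1 = (α / 2 - n + 1) + 1 by ring]
    exact Real.Gamma_add_one h2
  have hG1 : Real.Gamma (α / 2 + (n : ℝ)) ≠ 0 := by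
    have := gamma_ne hα0 hα2 n; simpa using this
  have hG2 : Real.Gamma (α / 2 - (n : ℝ) + 1) ≠ 0 := by
    have := gamma_ne hα0 hα2 (1 - n); rw [show α/2 + ((1 - n : ℤ) : ℝ) = α/2 - n + 1 by
      push_cast; ring] at this
    exact this
  have hpow : (-1 : ℝ) ^ (n - 1) = -(-1 : ℝ) ^ n := by
    rw [zpow_sub_one₀ (by norm_num : (-1:ℝ) ≠ 0)]
    norm_num
  have hD1 : (α / 2 + (n:ℝ)) * Real.Gamma (α / 2 + (n:ℝ)) * Real.Gamma (α / 2 - (n:ℝ) + 1) ≠ 0 :=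
    mul_ne_zero (mul_ne_zero h1 hG1) hG2
  have hD2 : Real.Gamma (α / 2 + (n:ℝ)) * ((α / 2 - (n:ℝ) + 1) * Real.Gamma (α / 2 - (n:ℝ) + 1)) ≠ 0 :=
    mul_ne_zero hG1 (mul_ne_zero h2 hG2)
  unfold B
  push_cast
  rw [hg1, hg2, hpow, mul_div_assoc', mul_div_assoc',
    show α / 2 + ((n:ℝ) - 1) + 1 = α / 2 + (n:ℝ) by ring, div_eq_div_iff hD1 hD2]
  ring

lemma coe_ne_zero_of_real {x : ℝ} (hx : x ≠ 0) : (x : ℂ) ≠ 0 := by exact_mod_cast hx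

def aW (α : ℝ) (n : ℤ) : ℂ := (1 / (2 * Real.pi)) • A α n

lemma recW (hα0 : 0 < α) (n : ℤ) :
    ((n : ℂ) + (α : ℂ) / 2) * aW α n = ((n : ℂ) - 1 - (α : ℂ) / 2) * aW α (n - 1) := by
  unfold aW
  rw [Complex.real_smul, Complex.real_smul]
  linear_combination ((1 / (2 * Real.pi) : ℝ) : ℂ) * rec hα0 n

lemma mainW (hα0 : 0 < α) (hα2 : α < 2) (n : ℤ) : aW α n = ((B α n : ℝ) : ℂ) := by
  induction n using Int.induction_on with
  | zero =>
    show (1 / (2 * Real.pi)) • A α 0 = _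
    rw [A_zero hα0, Complex.real_smul, ← Complex.ofReal_mul]
    congr 1
    unfold B
    have hπ : Real.pi ≠ 0 := Real.pi_ne_zero
    simp only [Int.cast_zero, zpow_zero, one_mul, add_zero, sub_zero]
    rw [show (1/(2*Real.pi)) * (2*Real.pi * (Real.Gamma (α+1)/(Real.Gamma (α/2+1))^2))
        = Real.Gamma (α+1)/(Real.Gamma (α/2+1))^2 by field_simp, sq]
  | succ k ih =>
    have hrec := recW hα0 ((k : ℤ) + 1)
    rw [show ((k:ℤ) + 1 - 1) = (k:ℤ) by ring, ih] at hrec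
    have hBc := congrArg (fun x : ℝ => (x : ℂ)) (Bstep hα0 hα2 ((k:ℤ) + 1))
    rw [show ((k:ℤ) + 1 - 1) = (k:ℤ) by ring] at hBc
    have hco : ((k:ℂ) + 1 + (α:ℂ)/2) ≠ 0 := by
      rw [show ((k:ℂ) + 1 + (α:ℂ)/2) = (((k:ℝ) + 1 + α/2 : ℝ) : ℂ) by push_cast; ring]
      apply coe_ne_zero_of_real
      have : (0:ℝ) ≤ (k:ℝ) := by positivity
      positivity
    apply mul_left_cancel₀ hco
    push_cast at hrec hBc ⊢
    linear_combination hrec - hBc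
  | pred k ih =>
    have hrec := recW hα0 (-(k : ℤ))
    rw [ih] at hrec
    have hBc := congrArg (fun x : ℝ => (x : ℂ)) (Bstep hα0 hα2 (-(k:ℤ)))
    have hco : (-(k:ℂ) - 1 - (α:ℂ)/2) ≠ 0 := by
      rw [show (-(k:ℂ) - 1 - (α:ℂ)/2) = ((-(k:ℝ) - 1 - α/2 : ℝ) : ℂ) by push_cast; ring]
      apply coe_ne_zero_of_real
      have : (0:ℝ) ≤ (k:ℝ) := by positivity
      intro hc; nlinarith
    apply mul_left_cancel₀ hco
    push_cast at hrec hBc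
    linear_combination hBc - hrec

end Stmt9Aux


/-- Closed form of the finite difference weights:
`a_n^{(α)} = (-1)^n Γ(α+1) / (Γ(α/2+n+1) Γ(α/2-n+1))`; in particular they are real. -/
theorem stmt9 (α : ℝ) (hα0 : 0 < α) (hα2 : α < 2) (n : ℤ) :
    aWeightC α n =
      ((((-1 : ℝ) ^ n * Real.Gamma (α + 1) /
        (Real.Gamma (α / 2 + n + 1) * Real.Gamma (α / 2 - n + 1))) : ℝ) : ℂ) := by
  have h : aWeightC α n = Stmt9Aux.aW α n := rfl
  rw [h, Stmt9Aux.mainW hα0 hα2 n, Stmt9Aux.B]
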